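/- Every β-Hölder domain Ω ⊂ ℝⁿ is a (1/β)-John domain: if there exist x₀ ∈ Ω and C₀ such that the quasihyperbolic distance satisfies k_Ω(x, x₀) ≤ (1/β) log(d(x₀,∂Ω)/d(x,∂Ω)) + C₀ for all x ∈ Ω, then there exists C such that for every point w on any quasihyperbolic geodesic γ from x₀ to x, |x - w|^{1/β} ≤ C d(w, ∂Ω). -/

import Mathlib

open Metric Set MeasureTheory intervalIntegral

noncomputable section

/-- An admissible curve from `x` to `y` in `Ω`: an arc-length (1-Lipschitz)
parametrization on `[0, L]` staying in `Ω`. -/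
def IsAdmCurve {n : ℕ} (Ω : Set (EuclideanSpace ℝ (Fin n)))
    (x y : EuclideanSpace ℝ (Fin n)) (L : ℝ) (γ : ℝ → EuclideanSpace ℝ (Fin n)) : Prop :=
  0 ≤ L ∧ LipschitzOnWith 1 γ (Set.Icc 0 L) ∧ γ 0 = x ∧ γ L = y ∧
    ∀ t ∈ Set.Icc 0 L, γ t ∈ Ω

/-- Quasihyperbolic length of a curve in `Ω`. -/
def qhLength {n : ℕ} (Ω : Set (EuclideanSpace ℝ (Fin n)))
    (L : ℝ) (γ : ℝ → EuclideanSpace ℝ (Fin n)) : ℝ :=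
  ∫ t in (0:ℝ)..L, 1 / infDist (γ t) (frontier Ω)

/-- Quasihyperbolic distance in `Ω`. -/
def qhDist {n : ℕ} (Ω : Set (EuclideanSpace ℝ (Fin n)))
    (x y : EuclideanSpace ℝ (Fin n)) : ℝ :=
  sInf {d : ℝ | ∃ L γ, IsAdmCurve Ω x y L γ ∧ d = qhLength Ω L γ}

variable {n : ℕ} {Ω : Set (EuclideanSpace ℝ (Fin n))}
  {x y w : EuclideanSpace ℝ (Fin n)} {L L1 L2 : ℝ} {γ γ1 γ2 : ℝ → EuclideanSpace ℝ (Fin n)}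

lemma qhLength_nonneg (hL : 0 ≤ L) : 0 ≤ qhLength Ω L γ := by
  apply intervalIntegral.integral_nonneg hL
  intro t _
  exact one_div_nonneg.mpr Metric.infDist_nonneg

lemma qhDist_bddBelow :
    BddBelow {d : ℝ | ∃ L γ, IsAdmCurve Ω x y L γ ∧ d = qhLength Ω L γ} := by
  refine ⟨0, ?_⟩
  rintro d ⟨L, γ, h, rfl⟩
  exact qhLength_nonneg h.1

lemma qhDist_le (h : IsAdmCurve Ω x y L γ) : qhDist Ω x y ≤ qhLength Ω L γ :=
  csInf_le qhDist_bddBelow ⟨L, γ, h, rfl⟩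

lemma isAdmCurve_reverse (h : IsAdmCurve Ω x y L γ) :
    IsAdmCurve Ω y x L (fun t => γ (L - t)) := by
  obtain ⟨hL, hlip, h0, hLx, hmem⟩ := h
  refine ⟨hL, ?_, by simpa using hLx, by simpa using h0, ?_⟩
  · apply LipschitzOnWith.of_dist_le_mul
    intro a ha b hb
    have h1 : L - a ∈ Set.Icc 0 L := ⟨by linarith [ha.2], by linarith [ha.1]⟩
    have h2 : L - b ∈ Set.Icc 0 L := ⟨by linarith [hb.2], by linarith [hb.1]⟩
    calc dist (γ (L - a)) (γ (L - b)) ≤ 1 * dist (L - a) (L - b) := hlip.dist_le_mul _ h1 _ h2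
    _ = 1 * dist a b := by rw [Real.dist_eq, Real.dist_eq]; congr 1; rw [abs_sub_comm]; congr 1; ring
  · intro t ht
    exact hmem _ ⟨by linarith [ht.2], by linarith [ht.1]⟩

lemma qhLength_reverse (hL : 0 ≤ L) :
    qhLength Ω L (fun t => γ (L - t)) = qhLength Ω L γ := by
  unfold qhLength
  rw [intervalIntegral.integral_comp_sub_left (fun t => 1 / infDist (γ t) (frontier Ω)) L]
  simp

lemma qhDist_symm_le (hne : ∃ L γ, IsAdmCurve Ω y x L γ) :
    qhDist Ω x y ≤ qhDist Ω y x := by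
  obtain ⟨L', γ', h'⟩ := hne
  refine le_csInf ⟨qhLength Ω L' γ', ⟨L', γ', h', rfl⟩⟩ ?_
  rintro d ⟨L'', γ'', h'', rfl⟩
  calc qhDist Ω x y ≤ qhLength Ω L'' (fun t => γ'' (L'' - t)) := qhDist_le (isAdmCurve_reverse h'')
  _ = qhLength Ω L'' γ'' := qhLength_reverse h''.1
lemma infDist_frontier_pos (hΩopen : IsOpen Ω) (hfr : (frontier Ω).Nonempty)
    (hx : x ∈ Ω) : 0 < infDist x (frontier Ω) := by
  rw [← (isClosed_frontier).notMem_iff_infDist_pos hfr]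
  rw [hΩopen.frontier_eq]
  exact fun h => h.2 hx

lemma adm_contOn (hΩopen : IsOpen Ω) (hfr : (frontier Ω).Nonempty)
    (h : IsAdmCurve Ω x y L γ) :
    ContinuousOn (fun t => 1 / infDist (γ t) (frontier Ω)) (Set.Icc 0 L) := by
  have hγc : ContinuousOn γ (Set.Icc 0 L) := h.2.1.continuousOn
  have hd : ContinuousOn (fun t => infDist (γ t) (frontier Ω)) (Set.Icc 0 L) :=
    (continuous_infDist_pt _).comp_continuousOn hγc
  exact continuousOn_const.div hd
    (fun t ht => (infDist_frontier_pos hΩopen hfr (h.2.2.2.2 t ht)).ne')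

lemma isAdmCurve_concat (h1 : IsAdmCurve Ω x w L1 γ1) (h2 : IsAdmCurve Ω w y L2 γ2) :
    IsAdmCurve Ω x y (L1 + L2) (fun t => if t ≤ L1 then γ1 t else γ2 (t - L1)) := by
  obtain ⟨hL1, hlip1, h10, h1L, hmem1⟩ := h1
  obtain ⟨hL2, hlip2, h20, h2L, hmem2⟩ := h2
  have key : ∀ a ∈ Set.Icc 0 (L1 + L2), ∀ b ∈ Set.Icc 0 (L1 + L2), a ≤ b →
      dist ((fun t => if t ≤ L1 then γ1 t else γ2 (t - L1)) a)
        ((fun t => if t ≤ L1 then γ1 t else γ2 (t - L1)) b) ≤ b - a := by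
    intro a ha b hb hab
    simp only
    by_cases hbL : b ≤ L1
    · have haL : a ≤ L1 := le_trans hab hbL
      rw [if_pos haL, if_pos hbL]
      calc dist (γ1 a) (γ1 b) ≤ 1 * dist a b :=
            hlip1.dist_le_mul _ ⟨ha.1, haL⟩ _ ⟨hb.1, hbL⟩
      _ = b - a := by rw [one_mul, Real.dist_eq, abs_of_nonpos (by linarith)] <;> ring_nf
    · push_neg at hbL
      rw [if_neg (not_le.mpr hbL)]
      have hbm : b - L1 ∈ Set.Icc 0 L2 := ⟨by linarith, by linarith [hb.2]⟩
      by_cases haL : a ≤ L1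
      · rw [if_pos haL]
        have d1 : dist (γ1 a) (γ1 L1) ≤ L1 - a := by
          calc dist (γ1 a) (γ1 L1) ≤ 1 * dist a L1 :=
                hlip1.dist_le_mul _ ⟨ha.1, haL⟩ _ ⟨hL1, le_refl _⟩
          _ = L1 - a := by rw [one_mul, Real.dist_eq, abs_of_nonpos (by linarith)] <;> ring_nf
        have d2 : dist (γ2 0) (γ2 (b - L1)) ≤ b - L1 := by
          calc dist (γ2 0) (γ2 (b - L1)) ≤ 1 * dist 0 (b - L1) :=
                hlip2.dist_le_mul _ ⟨le_refl _, hL2⟩ _ hbm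
          _ = b - L1 := by rw [one_mul, Real.dist_eq, abs_of_nonpos (by linarith)] <;> ring_nf
        calc dist (γ1 a) (γ2 (b - L1)) ≤ dist (γ1 a) (γ1 L1) + dist (γ1 L1) (γ2 (b - L1)) :=
              dist_triangle _ _ _
        _ = dist (γ1 a) (γ1 L1) + dist (γ2 0) (γ2 (b - L1)) := by rw [h1L, h20]
        _ ≤ (L1 - a) + (b - L1) := add_le_add d1 d2
        _ = b - a := by ring
      · push_neg at haL
        rw [if_neg (not_le.mpr haL)]
        have ham : a - L1 ∈ Set.Icc 0 L2 := ⟨by linarith, by linarith [ha.2]⟩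
        calc dist (γ2 (a - L1)) (γ2 (b - L1)) ≤ 1 * dist (a - L1) (b - L1) :=
              hlip2.dist_le_mul _ ham _ hbm
        _ = b - a := by rw [one_mul, Real.dist_eq, abs_of_nonpos (by linarith)] <;> ring_nf
  refine ⟨by linarith, ?_, ?_, ?_, ?_⟩
  · apply LipschitzOnWith.of_dist_le_mul
    intro a ha b hb
    rcases le_total a b with hab | hab
    · calc dist _ _ ≤ b - a := key a ha b hb hab
      _ = 1 * dist a b := by rw [one_mul, Real.dist_eq, abs_of_nonpos (by linarith)] <;> ring_nf
    · rw [dist_comm]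
      calc dist _ _ ≤ a - b := key b hb a ha hab
      _ = 1 * dist a b := by rw [one_mul, Real.dist_eq, abs_of_nonneg (by linarith)] <;> ring_nf
  · simpa [hL1] using h10
  · have : ¬ (L1 + L2 ≤ L1) ∨ L2 = 0 := by
      rcases eq_or_lt_of_le hL2 with h | h
      · exact Or.inr h.symm
      · exact Or.inl (by linarith)
    rcases this with h | h
    · simp only [if_neg h, add_sub_cancel_left]; exact h2L
    · subst h
      simp only [add_zero, if_pos (le_refl L1)]
      rw [h1L, ← h20]; exact h2L
  · intro t ht
    by_cases htL : t ≤ L1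
    · simp only [if_pos htL]; exact hmem1 _ ⟨ht.1, htL⟩
    · push_neg at htL
      simp only [if_neg (not_le.mpr htL)]
      exact hmem2 _ ⟨by linarith, by linarith [ht.2]⟩

lemma qhLength_concat (hΩopen : IsOpen Ω) (hfr : (frontier Ω).Nonempty)
    (h1 : IsAdmCurve Ω x w L1 γ1) (h2 : IsAdmCurve Ω w y L2 γ2) :
    qhLength Ω (L1 + L2) (fun t => if t ≤ L1 then γ1 t else γ2 (t - L1)) =
      qhLength Ω L1 γ1 + qhLength Ω L2 γ2 := by
  have hL1 := h1.1
  have hL2 := h2.1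
  set γ3 : ℝ → EuclideanSpace ℝ (Fin n) := fun t => if t ≤ L1 then γ1 t else γ2 (t - L1) with hγ3
  have heq1 : Set.EqOn (fun t => 1 / infDist (γ3 t) (frontier Ω))
      (fun t => 1 / infDist (γ1 t) (frontier Ω)) (Set.Icc 0 L1) := by
    intro t ht
    simp only [hγ3, if_pos ht.2]
  have heq2 : Set.EqOn (fun t => 1 / infDist (γ3 t) (frontier Ω))
      (fun t => 1 / infDist (γ2 (t - L1)) (frontier Ω)) (Set.Icc L1 (L1 + L2)) := by
    intro t ht
    by_cases htL : t ≤ L1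
    · have : t = L1 := le_antisymm htL ht.1
      subst this
      simp only [hγ3, if_pos (le_refl t), sub_self]
      rw [h1.2.2.2.1, ← h2.2.2.1]
    · simp only [hγ3, if_neg htL]
  have hc1 : ContinuousOn (fun t => 1 / infDist (γ1 t) (frontier Ω)) (Set.Icc 0 L1) :=
    adm_contOn hΩopen hfr h1
  have hc2 : ContinuousOn (fun t => 1 / infDist (γ2 t) (frontier Ω)) (Set.Icc 0 L2) :=
    adm_contOn hΩopen hfr h2
  have hc2' : ContinuousOn (fun t => 1 / infDist (γ2 (t - L1)) (frontier Ω))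
      (Set.Icc L1 (L1 + L2)) := by
    have : ContinuousOn (fun t : ℝ => t - L1) (Set.Icc L1 (L1 + L2)) :=
      (continuous_sub_right L1).continuousOn
    apply hc2.comp this
    rintro t ⟨ht1, ht2⟩
    constructor
    · show (0:ℝ) ≤ t - L1; linarith
    · show t - L1 ≤ L2; linarith
  have hi1 : IntervalIntegrable (fun t => 1 / infDist (γ3 t) (frontier Ω)) volume 0 L1 := by
    apply ContinuousOn.intervalIntegrable
    rw [Set.uIcc_of_le hL1]
    exact hc1.congr heq1
  have hi2 : IntervalIntegrable (fun t => 1 / infDist (γ3 t) (frontier Ω)) volume L1 (L1 + L2) := by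
    apply ContinuousOn.intervalIntegrable
    rw [Set.uIcc_of_le (by linarith)]
    exact hc2'.congr heq2
  unfold qhLength
  rw [← intervalIntegral.integral_add_adjacent_intervals hi1 hi2]
  congr 1
  · apply intervalIntegral.integral_congr
    rw [Set.uIcc_of_le hL1]
    exact heq1
  · rw [intervalIntegral.integral_congr (g := fun t => 1 / infDist (γ2 (t - L1)) (frontier Ω))
      (by rw [Set.uIcc_of_le (by linarith)]; exact heq2)]
    rw [intervalIntegral.integral_comp_sub_right (fun t => 1 / infDist (γ2 t) (frontier Ω)) L1]
    simp

lemma qhDist_triangle (hΩopen : IsOpen Ω) (hfr : (frontier Ω).Nonempty)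
    (hne1 : ∃ L γ, IsAdmCurve Ω x w L γ) (hne2 : ∃ L γ, IsAdmCurve Ω w y L γ) :
    qhDist Ω x y ≤ qhDist Ω x w + qhDist Ω w y := by
  obtain ⟨La, γa, ha⟩ := hne1
  obtain ⟨Lb, γb, hb⟩ := hne2
  have key : ∀ c1 ∈ {d : ℝ | ∃ L γ, IsAdmCurve Ω x w L γ ∧ d = qhLength Ω L γ},
      ∀ c2 ∈ {d : ℝ | ∃ L γ, IsAdmCurve Ω w y L γ ∧ d = qhLength Ω L γ},
      qhDist Ω x y ≤ c1 + c2 := by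
    rintro c1 ⟨L1, γ1, h1, rfl⟩ c2 ⟨L2, γ2, h2, rfl⟩
    calc qhDist Ω x y ≤ qhLength Ω (L1 + L2) (fun t => if t ≤ L1 then γ1 t else γ2 (t - L1)) :=
          qhDist_le (isAdmCurve_concat h1 h2)
    _ = qhLength Ω L1 γ1 + qhLength Ω L2 γ2 := qhLength_concat hΩopen hfr h1 h2
  have step1 : ∀ c1 ∈ {d : ℝ | ∃ L γ, IsAdmCurve Ω x w L γ ∧ d = qhLength Ω L γ},
      qhDist Ω x y - c1 ≤ qhDist Ω w y := by
    intro c1 hc1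
    refine le_csInf ⟨qhLength Ω Lb γb, ⟨Lb, γb, hb, rfl⟩⟩ ?_
    intro c2 hc2
    linarith [key c1 hc1 c2 hc2]
  have step2 : qhDist Ω x y - qhDist Ω w y ≤ qhDist Ω x w := by
    refine le_csInf ⟨qhLength Ω La γa, ⟨La, γa, ha, rfl⟩⟩ ?_
    intro c1 hc1
    linarith [step1 c1 hc1]
  linarith
lemma isAdmCurve_restrict {u : ℝ} (h : IsAdmCurve Ω x y L γ) (hu : u ∈ Set.Icc 0 L) :
    IsAdmCurve Ω x (γ u) u γ := by
  obtain ⟨hL, hlip, h0, hLx, hmem⟩ := h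
  refine ⟨hu.1, hlip.mono (Set.Icc_subset_Icc le_rfl hu.2), h0, rfl, ?_⟩
  intro t ht
  exact hmem t ⟨ht.1, le_trans ht.2 hu.2⟩

lemma isAdmCurve_shift {u : ℝ} (h : IsAdmCurve Ω x y L γ) (hu : u ∈ Set.Icc 0 L) :
    IsAdmCurve Ω (γ u) y (L - u) (fun t => γ (u + t)) := by
  obtain ⟨hL, hlip, h0, hLx, hmem⟩ := h
  have hsub : ∀ t ∈ Set.Icc (0:ℝ) (L - u), u + t ∈ Set.Icc 0 L :=
    fun t ht => ⟨by linarith [hu.1, ht.1], by linarith [ht.2]⟩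
  refine ⟨by linarith [hu.2], ?_, by simp, by show γ (u + (L - u)) = y; rw [show u + (L - u) = L by ring]; exact hLx, fun t ht => hmem _ (hsub t ht)⟩
  apply LipschitzOnWith.of_dist_le_mul
  intro a ha b hb
  calc dist (γ (u + a)) (γ (u + b)) ≤ 1 * dist (u + a) (u + b) :=
        hlip.dist_le_mul _ (hsub a ha) _ (hsub b hb)
  _ = 1 * dist a b := by rw [Real.dist_eq, Real.dist_eq]; congr 1; rw [add_sub_add_left_eq_sub]
/-- every β-Hölder domain is a (1/β)-John domain along
quasihyperbolic geodesics. -/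
theorem stmt_11 {n : ℕ} (hn : 2 ≤ n) (Ω : Set (EuclideanSpace ℝ (Fin n)))
    (hΩopen : IsOpen Ω) (hΩconn : IsConnected Ω) (hΩbdd : Bornology.IsBounded Ω)
    (β : ℝ) (hβ0 : 0 < β) (hβ1 : β ≤ 1)
    (x₀ : EuclideanSpace ℝ (Fin n)) (hx₀ : x₀ ∈ Ω) (C₀ : ℝ)
    (hHolder : ∀ x ∈ Ω,
      qhDist Ω x x₀ ≤ (1 / β) * Real.log (infDist x₀ (frontier Ω) / infDist x (frontier Ω)) + C₀) :
    ∃ C : ℝ, 0 < C ∧ ∀ x ∈ Ω, ∀ (L : ℝ) (γ : ℝ → EuclideanSpace ℝ (Fin n)),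
      IsAdmCurve Ω x₀ x L γ → qhLength Ω L γ = qhDist Ω x₀ x →
      ∀ t ∈ Set.Icc 0 L, dist x (γ t) ^ (1 / β) ≤ C * infDist (γ t) (frontier Ω) := by
  classical
  haveI : Nontrivial (EuclideanSpace ℝ (Fin n)) := by
    refine ⟨⟨EuclideanSpace.single ⟨0, by omega⟩ (1:ℝ), 0, ?_⟩⟩
    intro h
    have := congrArg (fun v : EuclideanSpace ℝ (Fin n) => v ⟨0, by omega⟩) h
    simp [EuclideanSpace.single_apply] at this
  have hfr : (frontier Ω).Nonempty := by
    rw [nonempty_frontier_iff]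
    refine ⟨⟨x₀, hx₀⟩, ?_⟩
    intro h
    rw [h] at hΩbdd
    exact NormedSpace.unbounded_univ ℝ (EuclideanSpace ℝ (Fin n)) hΩbdd
  set d₀ : ℝ := infDist x₀ (frontier Ω) with hd₀def
  have hd₀ : 0 < d₀ := infDist_frontier_pos hΩopen hfr hx₀
  set K : ℝ := (d₀ * Real.exp (β * C₀) / β) / d₀ ^ β with hKdef
  have hK : 0 < K := by
    apply div_pos (div_pos (mul_pos hd₀ (Real.exp_pos _)) hβ0)
    exact Real.rpow_pos_of_pos hd₀ β
  refine ⟨K ^ (1/β), Real.rpow_pos_of_pos hK _, ?_⟩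
  intro x hx L γ hadm hgeo u hu
  obtain ⟨hL, hlip, hγ0, hγL, hmem⟩ := hadm
  have hadm' : IsAdmCurve Ω x₀ x L γ := ⟨hL, hlip, hγ0, hγL, hmem⟩
  set f : ℝ → ℝ := fun t => 1 / infDist (γ t) (frontier Ω) with hfdef
  have hfc : ContinuousOn f (Set.Icc 0 L) := adm_contOn hΩopen hfr hadm'
  have hD : ∀ t ∈ Set.Icc 0 L, 0 < infDist (γ t) (frontier Ω) :=
    fun t ht => infDist_frontier_pos hΩopen hfr (hmem t ht)
  -- clamp
  set c : ℝ → ℝ := fun t => min (max t 0) L with hcdef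
  have hcmem : ∀ t, c t ∈ Set.Icc 0 L := fun t => ⟨le_min (le_max_right _ _) hL, min_le_right _ _⟩
  have hcid : ∀ t ∈ Set.Icc 0 L, c t = t := by
    intro t ht
    simp only [hcdef]
    rw [max_eq_left ht.1, min_eq_left ht.2]
  have hccont : Continuous c := (continuous_id.max continuous_const).min continuous_const
  set fb : ℝ → ℝ := fun t => 1 / infDist (γ (c t)) (frontier Ω) with hfbdef
  have hγc : Continuous (fun t => γ (c t)) :=
    hlip.continuousOn.comp_continuous hccont hcmem
  have hfbc : Continuous fb :=
    continuous_const.div ((continuous_infDist_pt _).comp hγc) (fun t => (hD _ (hcmem t)).ne')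
  have hfb_eq : ∀ t ∈ Set.Icc 0 L, fb t = f t := by
    intro t ht
    simp only [hfbdef, hfdef, hcid t ht]
  set F : ℝ → ℝ := fun v => ∫ s in (0:ℝ)..v, fb s with hFdef
  have hF' : ∀ v, HasDerivAt F (fb v) v := fun v =>
    intervalIntegral.integral_hasDerivAt_right (hfbc.intervalIntegrable _ _)
      (hfbc.stronglyMeasurableAtFilter _ _) hfbc.continuousAt
  have hFcont : Continuous F := continuous_iff_continuousAt.mpr fun v => (hF' v).continuousAt
  have hFeq : ∀ v ∈ Set.Icc 0 L, F v = ∫ s in (0:ℝ)..v, f s := by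
    intro v hv
    apply intervalIntegral.integral_congr
    rw [Set.uIcc_of_le hv.1]
    intro s hs
    exact hfb_eq s ⟨hs.1, le_trans hs.2 hv.2⟩
  have hqhL : qhLength Ω L γ = F L := (hFeq L ⟨hL, le_rfl⟩).symm
  -- Claim A : lower bound on F
  have claimA : ∀ v ∈ Set.Icc 0 L, Real.log (d₀ / infDist (γ v) (frontier Ω)) ≤ F v := by
    intro v hv
    set Dv := infDist (γ v) (frontier Ω) with hDvdef
    have hDv : 0 < Dv := hD v hv
    have hfull : Set.Icc (0:ℝ) v ⊆ Set.Icc 0 L := Set.Icc_subset_Icc le_rfl hv.2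
    have hpt : ∀ t ∈ Set.Icc 0 v, 1 / (Dv + (v - t)) ≤ f t := by
      intro t ht
      have htL : t ∈ Set.Icc 0 L := hfull ht
      have hbound : infDist (γ t) (frontier Ω) ≤ Dv + (v - t) := by
        have h1 : infDist (γ t) (frontier Ω) ≤ Dv + dist (γ t) (γ v) :=
          infDist_le_infDist_add_dist
        have h2 : dist (γ t) (γ v) ≤ v - t := by
          calc dist (γ t) (γ v) ≤ 1 * dist t v := hlip.dist_le_mul _ htL _ hv
          _ = v - t := by rw [one_mul, Real.dist_eq, abs_of_nonpos (by linarith [ht.2])]; ring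
        linarith
      exact one_div_le_one_div_of_le (hD t htL) hbound
    have hint1 : IntervalIntegrable (fun t => 1 / (Dv + (v - t))) volume 0 v := by
      apply ContinuousOn.intervalIntegrable
      apply continuousOn_const.div
      · exact (continuous_const.add (continuous_const.sub continuous_id)).continuousOn
      · intro t ht
        rw [Set.uIcc_of_le hv.1] at ht
        have : (0:ℝ) ≤ v - t := by linarith [ht.2]
        linarith
    have hint2 : IntervalIntegrable f volume 0 v :=
      (hfc.mono hfull).intervalIntegrable_of_Icc hv.1
    have hmono := intervalIntegral.integral_mono_on hv.1 hint1 hint2 hpt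
    have hcompute : (∫ t in (0:ℝ)..v, 1 / (Dv + (v - t))) = Real.log ((Dv + v) / Dv) := by
      have : (∫ t in (0:ℝ)..v, 1 / (Dv + (v - t))) =
          ∫ t in (0:ℝ)..v, (fun s => 1 / s) ((Dv + v) - t) := by
        apply intervalIntegral.integral_congr
        intro t _
        simp only []
        congr 1
        ring
      rw [this, intervalIntegral.integral_comp_sub_left (fun s => 1 / s) (Dv + v)]
      have h0 : Dv + v - v = Dv := by ring
      have h1 : Dv + v - 0 = Dv + v := by ring
      have hne : (0:ℝ) ∉ Set.uIcc Dv (Dv + v) := by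
        rw [Set.uIcc_of_le (by linarith [hv.1] : Dv ≤ Dv + v)]
        rintro ⟨h01, _⟩
        linarith
      rw [h0, h1, integral_one_div hne]
    have hd₀le : d₀ ≤ Dv + v := by
      have h1 : d₀ ≤ Dv + dist x₀ (γ v) := by
        rw [hd₀def, hDvdef]
        exact infDist_le_infDist_add_dist
      have h2 : dist x₀ (γ v) ≤ v := by
        rw [← hγ0]
        calc dist (γ 0) (γ v) ≤ 1 * dist 0 v := hlip.dist_le_mul _ ⟨le_rfl, hL⟩ _ hv
        _ = v := by rw [one_mul, Real.dist_eq, abs_of_nonpos (by linarith [hv.1])]; ring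
      linarith
    have hlog : Real.log (d₀ / Dv) ≤ Real.log ((Dv + v) / Dv) := by
      apply Real.log_le_log (div_pos hd₀ hDv)
      exact (div_le_div_iff_of_pos_right hDv).mpr hd₀le
    rw [hFeq v hv]
    calc Real.log (d₀ / Dv) ≤ Real.log ((Dv + v) / Dv) := hlog
    _ = ∫ t in (0:ℝ)..v, 1 / (Dv + (v - t)) := hcompute.symm
    _ ≤ ∫ t in (0:ℝ)..v, f t := hmono
  -- Claim B : upper bound on distance to boundary along the geodesic
  have claimB : ∀ v ∈ Set.Icc 0 L,
      infDist (γ v) (frontier Ω) ≤ d₀ * Real.exp (β * C₀ - β * F v) := by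
    intro v hv
    set Dv := infDist (γ v) (frontier Ω) with hDvdef
    have hDv : 0 < Dv := hD v hv
    have hadm_res : IsAdmCurve Ω x₀ (γ v) v γ := by
      exact isAdmCurve_restrict hadm' hv
    have hadm_sh : IsAdmCurve Ω (γ v) x (L - v) (fun t => γ (v + t)) :=
      isAdmCurve_shift hadm' hv
    have hshift_len : qhLength Ω (L - v) (fun t => γ (v + t)) = F L - F v := by
      unfold qhLength
      have e1 : (∫ t in (0:ℝ)..(L - v), 1 / infDist (γ (v + t)) (frontier Ω)) =
          ∫ t in v..L, f t := by
        rw [show (∫ t in (0:ℝ)..(L - v), 1 / infDist (γ (v + t)) (frontier Ω)) =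
            ∫ t in (0:ℝ)..(L - v), f (v + t) from rfl]
        rw [intervalIntegral.integral_comp_add_left f v, show v + (L - v) = L by ring,
          show v + 0 = v by ring]
      have e2 : (∫ t in v..L, f t) = ∫ t in v..L, fb t := by
        apply intervalIntegral.integral_congr
        rw [Set.uIcc_of_le hv.2]
        intro s hs
        exact (hfb_eq s ⟨le_trans hv.1 hs.1, hs.2⟩).symm
      have e3 : F v + (∫ t in v..L, fb t) = F L :=
        intervalIntegral.integral_add_adjacent_intervals
          (hfbc.intervalIntegrable 0 v) (hfbc.intervalIntegrable v L)
      rw [e1, e2]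
      linarith
    have tri : qhDist Ω x₀ x ≤ qhDist Ω x₀ (γ v) + qhDist Ω (γ v) x :=
      qhDist_triangle hΩopen hfr ⟨v, γ, hadm_res⟩ ⟨L - v, _, hadm_sh⟩
    have h1 : qhDist Ω (γ v) x ≤ F L - F v :=
      le_of_le_of_eq (qhDist_le hadm_sh) hshift_len
    have h2 : F L = qhDist Ω x₀ x := by rw [← hqhL]; exact hgeo
    have h3 : qhDist Ω x₀ (γ v) ≤ qhDist Ω (γ v) x₀ :=
      qhDist_symm_le ⟨v, _, isAdmCurve_reverse hadm_res⟩
    have h4 := hHolder (γ v) (hmem v hv)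
    have h5 : F v ≤ (1 / β) * Real.log (d₀ / Dv) + C₀ := by
      rw [← hDvdef] at h4
      linarith
    have h6 : β * (F v - C₀) ≤ Real.log (d₀ / Dv) := by
      have := mul_le_mul_of_nonneg_left (show F v - C₀ ≤ (1/β) * Real.log (d₀/Dv) by linarith)
        hβ0.le
      rwa [show β * ((1/β) * Real.log (d₀/Dv)) = Real.log (d₀/Dv) by field_simp] at this
    have h7 : Real.exp (β * (F v - C₀)) ≤ d₀ / Dv :=
      (Real.le_log_iff_exp_le (div_pos hd₀ hDv)).mp h6
    have h8 : Real.exp (β * (F v - C₀)) * Dv ≤ d₀ := (le_div_iff₀ hDv).mp h7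
    have h9 : Real.exp (β * C₀ - β * F v) = (Real.exp (β * (F v - C₀)))⁻¹ := by
      rw [← Real.exp_neg]
      congr 1
      ring
    have hea : (0:ℝ) < Real.exp (β * (F v - C₀)) := Real.exp_pos _
    rw [h9]
    calc Dv = (Real.exp (β * (F v - C₀)) * Dv) / Real.exp (β * (F v - C₀)) := by
          field_simp
    _ ≤ d₀ / Real.exp (β * (F v - C₀)) := (div_le_div_iff_of_pos_right hea).mpr h8
    _ = d₀ * (Real.exp (β * (F v - C₀)))⁻¹ := div_eq_mul_inv _ _
  -- Claim C : tail length estimate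
  have claimC : L - u ≤ (d₀ * Real.exp (β * C₀) / β) * Real.exp (-β * F u) := by
    set M : ℝ := d₀ * Real.exp (β * C₀) with hMdef
    have hM : 0 < M := mul_pos hd₀ (Real.exp_pos _)
    set G : ℝ → ℝ := fun v => -(M / β) * Real.exp (-β * F v) with hGdef
    have hG' : ∀ v, HasDerivAt G (M * Real.exp (-β * F v) * fb v) v := by
      intro v
      have h1 : HasDerivAt (fun w => -β * F w) (-β * fb v) v := (hF' v).const_mul (-β)
      have h2 : HasDerivAt (fun w => Real.exp (-β * F w))
          (Real.exp (-β * F v) * (-β * fb v)) v := h1.exp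
      have h3 := h2.const_mul (-(M / β))
      refine h3.congr_deriv ?_
      rw [show -(M / β) * (Real.exp (-β * F v) * (-β * fb v)) = M * Real.exp (-β * F v) * fb v * (β / β) by ring, div_self hβ0.ne', mul_one]
    have hcontI : Continuous (fun v => M * Real.exp (-β * F v) * fb v) :=
      (continuous_const.mul (Real.continuous_exp.comp (continuous_const.mul hFcont))).mul hfbc
    have hftc : (∫ v in u..L, M * Real.exp (-β * F v) * fb v) = G L - G u :=
      intervalIntegral.integral_eq_sub_of_hasDerivAt (fun v _ => hG' v)
        (hcontI.intervalIntegrable u L)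
    have hone : (∫ v in u..L, (1:ℝ)) = L - u := by simp
    have hmono : (∫ v in u..L, (1:ℝ)) ≤ ∫ v in u..L, M * Real.exp (-β * F v) * fb v := by
      apply intervalIntegral.integral_mono_on hu.2 intervalIntegrable_const
        (hcontI.intervalIntegrable u L)
      intro v hv
      have hvL : v ∈ Set.Icc 0 L := ⟨le_trans hu.1 hv.1, hv.2⟩
      have hDv : 0 < infDist (γ v) (frontier Ω) := hD v hvL
      have hBB := claimB v hvL
      have hfbv : fb v = 1 / infDist (γ v) (frontier Ω) := hfb_eq v hvL
      rw [hfbv]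
      have hexp : M * Real.exp (-β * F v) = d₀ * Real.exp (β * C₀ - β * F v) := by
        rw [hMdef, mul_assoc, ← Real.exp_add]
        congr 2
        ring
      rw [hexp]
      calc (1:ℝ) = infDist (γ v) (frontier Ω) * (1 / infDist (γ v) (frontier Ω)) := by
            field_simp
      _ ≤ d₀ * Real.exp (β * C₀ - β * F v) * (1 / infDist (γ v) (frontier Ω)) := by
            apply mul_le_mul_of_nonneg_right hBB
            positivity
    have hGle : G L - G u ≤ (M / β) * Real.exp (-β * F u) := by
      have h1 : 0 < Real.exp (-β * F L) := Real.exp_pos _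
      have h2 : 0 < M / β := div_pos hM hβ0
      have : G L - G u = (M / β) * Real.exp (-β * F u) - (M / β) * Real.exp (-β * F L) := by
        rw [hGdef]; ring
      rw [this]
      nlinarith
    calc L - u = ∫ v in u..L, (1:ℝ) := hone.symm
    _ ≤ ∫ v in u..L, M * Real.exp (-β * F v) * fb v := hmono
    _ ≤ (M / β) * Real.exp (-β * F u) := le_of_eq_of_le hftc hGle
  -- final assembly
  set Du : ℝ := infDist (γ u) (frontier Ω) with hDudef
  have hDu : 0 < Du := hD u hu
  have hdistLu : dist x (γ u) ≤ L - u := by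
    rw [← hγL]
    calc dist (γ L) (γ u) ≤ 1 * dist L u := hlip.dist_le_mul _ ⟨hL, le_rfl⟩ _ hu
    _ = L - u := by rw [one_mul, Real.dist_eq, abs_of_nonneg (by linarith [hu.2])]
  have hexpA : Real.exp (-β * F u) ≤ (Du / d₀) ^ β := by
    have hA := claimA u hu
    rw [← hDudef] at hA
    have h1 : Real.log (d₀ / Du) = - Real.log (Du / d₀) := by
      rw [← Real.log_inv, inv_div]
    have h2 : -β * F u ≤ β * Real.log (Du / d₀) := by
      nlinarith [hA, h1]
    have h3 : β * Real.log (Du / d₀) = Real.log ((Du / d₀) ^ β) :=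
      (Real.log_rpow (div_pos hDu hd₀) β).symm
    calc Real.exp (-β * F u) ≤ Real.exp (Real.log ((Du / d₀) ^ β)) := by
          apply Real.exp_le_exp.mpr
          rw [← h3]
          exact h2
    _ = (Du / d₀) ^ β := Real.exp_log (Real.rpow_pos_of_pos (div_pos hDu hd₀) β)
  have hmain : dist x (γ u) ≤ K * Du ^ β := by
    have h1 : dist x (γ u) ≤ (d₀ * Real.exp (β * C₀) / β) * ((Du / d₀) ^ β) := by
      calc dist x (γ u) ≤ L - u := hdistLu
      _ ≤ (d₀ * Real.exp (β * C₀) / β) * Real.exp (-β * F u) := claimC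
      _ ≤ (d₀ * Real.exp (β * C₀) / β) * ((Du / d₀) ^ β) := by
            apply mul_le_mul_of_nonneg_left hexpA
            positivity
    have h2 : (Du / d₀) ^ β = Du ^ β / d₀ ^ β := Real.div_rpow hDu.le hd₀.le β
    have h3 : (d₀ * Real.exp (β * C₀) / β) * ((Du / d₀) ^ β) = K * Du ^ β := by
      rw [h2, hKdef]
      field_simp
    rw [← h3]
    exact h1
  calc dist x (γ u) ^ (1/β) ≤ (K * Du ^ β) ^ (1/β) :=
        Real.rpow_le_rpow dist_nonneg hmain (by positivity)
  _ = K ^ (1/β) * (Du ^ β) ^ (1/β) := Real.mul_rpow hK.le (Real.rpow_nonneg hDu.le β)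
  _ = K ^ (1/β) * Du := by
        rw [← Real.rpow_mul hDu.le, mul_one_div_cancel hβ0.ne', Real.rpow_one]

end
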